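/- Let W ∈ ℝ_+^{V×K} have every column in Δ_{V−1} and let H ∈ ℝ_+^{K×D} have every column in Δ_{K−1}. Then Σ_v (WH)_{vd} = 1 for every d. Moreover, if X ∈ ℝ^{V×D} has strictly positive entries and (WH)_{vd} > 0 for all v, d, then with N_d := Σ_v x_{vd}, D_KL(X‖WH) = Σ_d N_d · Σ_v (x_{vd}/N_d) log((x_{vd}/N_d)/(WH)_{vd}) + Σ_d (N_d log N_d − N_d) + D, where D is the number of columns; in particular, minimizing D_KL(X‖WH) over such pairs (W, H) is equivalent to maximizing the PLSA objective Σ_{v,d} x_{vd} log(WH)_{vd}. -/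

import Mathlib

/-- Matrix product `(WH)_{vd} = ∑ k, w_{vk} h_{kd}`. -/
noncomputable def matMul {V K D : ℕ} (W : Fin V → Fin K → ℝ) (H : Fin K → Fin D → ℝ) :
    Fin V → Fin D → ℝ := fun v d => ∑ k, W v k * H k d

/-- Generalized Kullback--Leibler divergence `D_KL(X ‖ Y)` (real-valued; here it is only
used for strictly positive matrices, where no conventions are needed). -/
noncomputable def klDiv {V D : ℕ} (X Y : Fin V → Fin D → ℝ) : ℝ :=
  ∑ v, ∑ d, (X v d * Real.log (X v d / Y v d) - X v d + Y v d)

theorem nmf_doubly_normalized_plsa_objective {V K D : ℕ}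
    (W : Fin V → Fin K → ℝ) (H : Fin K → Fin D → ℝ)
    (hW0 : ∀ v k, 0 ≤ W v k) (hW1 : ∀ k, (∑ v, W v k) = 1)
    (hH0 : ∀ k d, 0 ≤ H k d) (hH1 : ∀ d, (∑ k, H k d) = 1) :
    -- the reconstruction has unit column sums
    (∀ d, (∑ v, matMul W H v d) = 1) ∧
    -- for positive data the KL loss decomposes into per-document (normalized) KL
    -- divergences plus constants, hence minimizing it is the same as maximizing the
    -- PLSA objective ∑_{v,d} x_{vd} log (WH)_{vd}
    (∀ X : Fin V → Fin D → ℝ, (∀ v d, 0 < X v d) → (∀ v d, 0 < matMul W H v d) →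
      klDiv X (matMul W H) =
        (∑ d, (∑ v, X v d) *
          (∑ v, (X v d / ∑ v', X v' d) *
            Real.log ((X v d / ∑ v', X v' d) / matMul W H v d))) +
        (∑ d, ((∑ v, X v d) * Real.log (∑ v, X v d) - ∑ v, X v d)) + (D : ℝ) ∧
      klDiv X (matMul W H) =
        ((∑ v, ∑ d, (X v d * Real.log (X v d) - X v d)) + (D : ℝ))
          - ∑ v, ∑ d, X v d * Real.log (matMul W H v d)) := by
  have h1 : ∀ d, (∑ v, matMul W H v d) = 1 := by
    intro d
    simp only [matMul]
    rw [Finset.sum_comm]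
    simp_rw [← Finset.sum_mul, hW1, one_mul, hH1]
  refine ⟨h1, fun X hX hY => ?_⟩
  have key2 : klDiv X (matMul W H) =
      ((∑ v, ∑ d, (X v d * Real.log (X v d) - X v d)) + (D : ℝ))
        - ∑ v, ∑ d, X v d * Real.log (matMul W H v d) := by
    have hD : ∑ v, ∑ d, matMul W H v d = (D : ℝ) := by
      rw [Finset.sum_comm]; simp [h1]
    unfold klDiv
    have heq : ∀ v d, X v d * Real.log (X v d / matMul W H v d) - X v d + matMul W H v d
        = (X v d * Real.log (X v d) - X v d)
          + (matMul W H v d - X v d * Real.log (matMul W H v d)) := by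
      intro v d
      rw [Real.log_div (hX v d).ne' (hY v d).ne']
      ring
    simp_rw [heq, Finset.sum_add_distrib, Finset.sum_sub_distrib, hD]
    ring
  refine ⟨?_, key2⟩
  rw [key2]
  rcases Nat.eq_zero_or_pos D with hDz | hDpos
  · subst hDz
    simp
  · have hVpos : 0 < V := by
      rcases Nat.eq_zero_or_pos V with hV | hV
      · exfalso
        have := h1 ⟨0, hDpos⟩
        subst hV
        simp at this
      · exact hV
    haveI : Nonempty (Fin V) := Fin.pos_iff_nonempty.mp hVpos
    have hterm : ∀ d : Fin D, (∑ v, X v d) *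
        (∑ v, (X v d / ∑ v', X v' d) *
          Real.log ((X v d / ∑ v', X v' d) / matMul W H v d))
        = (∑ v, X v d * Real.log (X v d))
          - (∑ v, X v d) * Real.log (∑ v, X v d)
          - (∑ v, X v d * Real.log (matMul W H v d)) := by
      intro d
      set N := ∑ v', X v' d with hNdef
      have hN : 0 < N := Finset.sum_pos (fun v _ => hX v d) Finset.univ_nonempty
      have hinner : ∀ v : Fin V, (X v d / N) * Real.log ((X v d / N) / matMul W H v d)
          = (X v d / N) * (Real.log (X v d) - Real.log N - Real.log (matMul W H v d)) := by
        intro v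
        rw [Real.log_div (div_pos (hX v d) hN).ne' (hY v d).ne', Real.log_div (hX v d).ne' hN.ne']
      rw [Finset.mul_sum]
      simp_rw [hinner]
      have hNmul : ∀ v : Fin V, N * ((X v d / N) *
          (Real.log (X v d) - Real.log N - Real.log (matMul W H v d)))
          = X v d * Real.log (X v d) - X v d * Real.log N
            - X v d * Real.log (matMul W H v d) := by
        intro v
        field_simp
      simp_rw [hNmul, Finset.sum_sub_distrib, ← Finset.sum_mul]
      rfl
    simp_rw [hterm]
    rw [Finset.sum_comm (s := Finset.univ) (t := Finset.univ)
      (f := fun v d => X v d * Real.log (X v d) - X v d)]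
    rw [Finset.sum_comm (s := Finset.univ) (t := Finset.univ)
      (f := fun v d => X v d * Real.log (matMul W H v d))]
    simp_rw [Finset.sum_sub_distrib]
    ring
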